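/- Let n be an integer and M a triangle-free graph on at least 3n+4 vertices whose complement contains K_n. Then M^c contains K_{n+2} - D_{m,m}, where m = ⌊(n-1)/2⌋. -/

import Mathlib

open SimpleGraph

/-- `H` is contained in `G` as a (not necessarily induced) subgraph. -/
def Contains {α β : Type*} (H : SimpleGraph α) (G : SimpleGraph β) : Prop :=
  ∃ f : α → β, Function.Injective f ∧ ∀ ⦃a b⦄, H.Adj a b → G.Adj (f a) (f b)

/-- `K_k` minus the edges of the double star `D_{m,m}`: centers `0` and `1` are
adjacent, `0` has the extra leaves `2,…,m+1` and `1` has the extra leaves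
`m+2,…,2m+1`. -/
def KnMinusDoubleStar (k m : ℕ) : SimpleGraph (Fin k) :=
  (SimpleGraph.fromRel (fun a b : Fin k =>
    (a.val = 0 ∧ b.val = 1) ∨
    (a.val = 0 ∧ 2 ≤ b.val ∧ b.val ≤ m + 1) ∨
    (a.val = 1 ∧ m + 2 ≤ b.val ∧ b.val ≤ 2 * m + 1)))ᶜ

open Finset

/-- In a triangle-free graph, adjacent vertices have disjoint neighborhoods
(restricted to any finset `W`). -/
private lemma tri_disj' {V : Type*} [DecidableEq V] (M : SimpleGraph V) [DecidableRel M.Adj]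
    (htf : M.CliqueFree 3) {u v : V} (h : M.Adj u v) (W : Finset V) :
    W.filter (fun w => M.Adj u w) ∩ W.filter (fun w => M.Adj v w) = ∅ := by
  rw [Finset.eq_empty_iff_forall_notMem]
  rintro w hw
  rw [Finset.mem_inter, Finset.mem_filter, Finset.mem_filter] at hw
  exact htf {u, v, w} (SimpleGraph.is3Clique_triple_iff.mpr ⟨h, hw.1.2, hw.2.2⟩)

private lemma embed_of_config {V : Type*} [DecidableEq V] (M : SimpleGraph V) [DecidableRel M.Adj]
    (n m : ℕ) (hm : 2 * m ≤ n) (W : Finset V) (hWcard : W.card = n)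
    (hWind : ∀ u ∈ W, ∀ v ∈ W, u ≠ v → ¬ M.Adj u v)
    (x y : V) (hx : x ∉ W) (hy : y ∉ W) (hxy : x ≠ y)
    (hA : (W.filter (fun w => M.Adj x w)).card ≤ m)
    (hB : (W.filter (fun w => M.Adj y w)).card ≤ m)
    (hAB : W.filter (fun w => M.Adj x w) ∩ W.filter (fun w => M.Adj y w) = ∅) :
    Contains (KnMinusDoubleStar (n + 2) m) Mᶜ := by
  classical
  set A := W.filter (fun w => M.Adj x w) with hAdef
  set B := W.filter (fun w => M.Adj y w) with hBdef
  have hAW : A ⊆ W := filter_subset _ _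
  have hBW : B ⊆ W := filter_subset _ _
  have hAmem : ∀ w ∈ W, M.Adj x w → w ∈ A := fun w hw h => mem_filter.mpr ⟨hw, h⟩
  have hBmem : ∀ w ∈ W, M.Adj y w → w ∈ B := fun w hw h => mem_filter.mpr ⟨hw, h⟩
  have hAsubWB : A ⊆ W \ B := fun w hw =>
    mem_sdiff.mpr ⟨hAW hw, fun hb => notMem_empty w (hAB ▸ mem_inter.mpr ⟨hw, hb⟩)⟩
  have hWBcard : m ≤ (W \ B).card := by
    rw [card_sdiff_of_subset hBW, hWcard]; omega
  obtain ⟨A', hAA', hA'WB, hA'card⟩ := Finset.exists_subsuperset_card_eq hAsubWB hA hWBcard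
  have hA'W : A' ⊆ W := fun w hw => (mem_sdiff.mp (hA'WB hw)).1
  have hBsubWA' : B ⊆ W \ A' := fun w hw =>
    mem_sdiff.mpr ⟨hBW hw, fun ha => (mem_sdiff.mp (hA'WB ha)).2 hw⟩
  have hWA'card : m ≤ (W \ A').card := by rw [card_sdiff_of_subset hA'W, hWcard, hA'card]; omega
  obtain ⟨B', hBB', hB'WA, hB'card⟩ := Finset.exists_subsuperset_card_eq hBsubWA' hB hWA'card
  have hB'W : B' ⊆ W := fun w hw => (mem_sdiff.mp (hB'WA hw)).1
  have hB'A' : ∀ w ∈ B', w ∉ A' := fun w hw => (mem_sdiff.mp (hB'WA hw)).2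
  set C := (W \ A') \ B' with hCdef
  have hCW : C ⊆ W := fun w hw => (mem_sdiff.mp (mem_sdiff.mp hw).1).1
  have hCA' : ∀ w ∈ C, w ∉ A' := fun w hw => (mem_sdiff.mp (mem_sdiff.mp hw).1).2
  have hCB' : ∀ w ∈ C, w ∉ B' := fun w hw => (mem_sdiff.mp hw).2
  have hCcard : C.card = n - 2 * m := by
    rw [hCdef, card_sdiff_of_subset hB'WA, card_sdiff_of_subset hA'W, hWcard, hA'card, hB'card]; omega
  -- enumerations of A', B', C
  obtain ⟨eA, heAmem, heAinj⟩ : ∃ e : Fin m → V, (∀ i, e i ∈ A') ∧ Function.Injective e := by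
    refine ⟨fun i => (A'.equivFin.symm (Fin.cast hA'card.symm i) : V),
      fun i => (A'.equivFin.symm _).2, ?_⟩
    intro i j h
    have h2 := A'.equivFin.symm.injective (Subtype.coe_injective h)
    have h3 := congrArg Fin.val h2
    simp only [Fin.coe_cast] at h3
    exact Fin.ext h3
  obtain ⟨eB, heBmem, heBinj⟩ : ∃ e : Fin m → V, (∀ i, e i ∈ B') ∧ Function.Injective e := by
    refine ⟨fun i => (B'.equivFin.symm (Fin.cast hB'card.symm i) : V),
      fun i => (B'.equivFin.symm _).2, ?_⟩
    intro i j h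
    have h2 := B'.equivFin.symm.injective (Subtype.coe_injective h)
    have h3 := congrArg Fin.val h2
    simp only [Fin.coe_cast] at h3
    exact Fin.ext h3
  obtain ⟨eC, heCmem, heCinj⟩ : ∃ e : Fin (n - 2*m) → V, (∀ i, e i ∈ C) ∧ Function.Injective e := by
    refine ⟨fun i => (C.equivFin.symm (Fin.cast hCcard.symm i) : V),
      fun i => (C.equivFin.symm _).2, ?_⟩
    intro i j h
    have h2 := C.equivFin.symm.injective (Subtype.coe_injective h)
    have h3 := congrArg Fin.val h2
    simp only [Fin.coe_cast] at h3
    exact Fin.ext h3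
  set f : Fin (n + 2) → V := fun i =>
    if h0 : i.val = 0 then x
    else if h1 : i.val = 1 then y
    else if h2 : i.val < m + 2 then eA ⟨i.val - 2, by omega⟩
    else if h3 : i.val < 2 * m + 2 then eB ⟨i.val - (m + 2), by omega⟩
    else eC ⟨i.val - (2 * m + 2), by have := i.isLt; omega⟩
    with hfdef
  have hzone : ∀ i : Fin (n + 2),
      (i.val = 0 ∧ f i = x) ∨ (i.val = 1 ∧ f i = y) ∨
      (2 ≤ i.val ∧ i.val < m + 2 ∧ ∃ j, f i = eA j ∧ (j : ℕ) + 2 = i.val) ∨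
      (m + 2 ≤ i.val ∧ i.val < 2 * m + 2 ∧ ∃ j, f i = eB j ∧ (j : ℕ) + (m + 2) = i.val) ∨
      (2 * m + 2 ≤ i.val ∧ ∃ j, f i = eC j ∧ (j : ℕ) + (2 * m + 2) = i.val) := by
    intro i
    by_cases h0 : i.val = 0
    · refine Or.inl ⟨h0, ?_⟩
      simp only [hfdef]; rw [dif_pos h0]
    by_cases h1 : i.val = 1
    · refine Or.inr (Or.inl ⟨h1, ?_⟩)
      simp only [hfdef]; rw [dif_neg h0, dif_pos h1]
    by_cases h2 : i.val < m + 2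
    · refine Or.inr (Or.inr (Or.inl ⟨by omega, h2, ⟨⟨i.val - 2, by omega⟩, ?_, by simp; omega⟩⟩))
      simp only [hfdef]; rw [dif_neg h0, dif_neg h1, dif_pos h2]
    by_cases h3 : i.val < 2 * m + 2
    · refine Or.inr (Or.inr (Or.inr (Or.inl ⟨by omega, h3,
        ⟨⟨i.val - (m + 2), by omega⟩, ?_, by simp; omega⟩⟩)))
      simp only [hfdef]; rw [dif_neg h0, dif_neg h1, dif_neg h2, dif_pos h3]
    · refine Or.inr (Or.inr (Or.inr (Or.inr ⟨by omega,
        ⟨⟨i.val - (2 * m + 2), by have := i.isLt; omega⟩, ?_, by simp; omega⟩⟩)))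
      simp only [hfdef]; rw [dif_neg h0, dif_neg h1, dif_neg h2, dif_neg h3]
  have hfinj : Function.Injective f := by
    intro i j hij
    rcases hzone i with ⟨h1, e1⟩ | ⟨h1, e1⟩ | ⟨h1, h1', j₁, e1, he1⟩ |
        ⟨h1, h1', j₁, e1, he1⟩ | ⟨h1, j₁, e1, he1⟩ <;>
      rcases hzone j with ⟨g1, f1⟩ | ⟨g1, f1⟩ | ⟨g1, g1', j₂, f1, hf1⟩ |
        ⟨g1, g1', j₂, f1, hf1⟩ | ⟨g1, j₂, f1, hf1⟩
    · exact Fin.ext (by omega)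
    · exact absurd (by rw [← e1, hij, f1]) hxy
    · have hv : x = eA j₂ := by rw [← e1, hij, f1]
      exact absurd (hv ▸ hA'W (heAmem j₂)) hx
    · have hv : x = eB j₂ := by rw [← e1, hij, f1]
      exact absurd (hv ▸ hB'W (heBmem j₂)) hx
    · have hv : x = eC j₂ := by rw [← e1, hij, f1]
      exact absurd (hv ▸ hCW (heCmem j₂)) hx
    · exact absurd (by rw [← f1, ← hij, e1]) hxy
    · exact Fin.ext (by omega)
    · have hv : y = eA j₂ := by rw [← e1, hij, f1]
      exact absurd (hv ▸ hA'W (heAmem j₂)) hy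
    · have hv : y = eB j₂ := by rw [← e1, hij, f1]
      exact absurd (hv ▸ hB'W (heBmem j₂)) hy
    · have hv : y = eC j₂ := by rw [← e1, hij, f1]
      exact absurd (hv ▸ hCW (heCmem j₂)) hy
    · have hv : eA j₁ = x := by rw [← e1, hij, f1]
      exact absurd (hv ▸ hA'W (heAmem j₁)) hx
    · have hv : eA j₁ = y := by rw [← e1, hij, f1]
      exact absurd (hv ▸ hA'W (heAmem j₁)) hy
    · have h := heAinj (by rw [← e1, hij, f1] : eA j₁ = eA j₂)
      have h' := congrArg Fin.val h
      exact Fin.ext (by omega)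
    · have hv : eA j₁ = eB j₂ := by rw [← e1, hij, f1]
      exact absurd (hv ▸ heAmem j₁) (hB'A' _ (heBmem j₂))
    · have hv : eA j₁ = eC j₂ := by rw [← e1, hij, f1]
      exact absurd (hv ▸ heAmem j₁) (hCA' _ (heCmem j₂))
    · have hv : eB j₁ = x := by rw [← e1, hij, f1]
      exact absurd (hv ▸ hB'W (heBmem j₁)) hx
    · have hv : eB j₁ = y := by rw [← e1, hij, f1]
      exact absurd (hv ▸ hB'W (heBmem j₁)) hy
    · have hv : eB j₁ = eA j₂ := by rw [← e1, hij, f1]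
      exact absurd (hv ▸ heBmem j₁) (fun hmem => hB'A' _ hmem (heAmem j₂))
    · have h := heBinj (by rw [← e1, hij, f1] : eB j₁ = eB j₂)
      have h' := congrArg Fin.val h
      exact Fin.ext (by omega)
    · have hv : eB j₁ = eC j₂ := by rw [← e1, hij, f1]
      exact absurd (hv ▸ heBmem j₁) (hCB' _ (heCmem j₂))
    · have hv : eC j₁ = x := by rw [← e1, hij, f1]
      exact absurd (hv ▸ hCW (heCmem j₁)) hx
    · have hv : eC j₁ = y := by rw [← e1, hij, f1]
      exact absurd (hv ▸ hCW (heCmem j₁)) hy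
    · have hv : eC j₁ = eA j₂ := by rw [← e1, hij, f1]
      exact absurd (hv ▸ heCmem j₁) (fun hmem => hCA' _ hmem (heAmem j₂))
    · have hv : eC j₁ = eB j₂ := by rw [← e1, hij, f1]
      exact absurd (hv ▸ heCmem j₁) (fun hmem => hCB' _ hmem (heBmem j₂))
    · have h := heCinj (by rw [← e1, hij, f1] : eC j₁ = eC j₂)
      have h' := congrArg Fin.val h
      exact Fin.ext (by omega)
  refine ⟨f, hfinj, ?_⟩
  intro i j hadj
  rw [KnMinusDoubleStar, SimpleGraph.compl_adj] at hadj
  obtain ⟨hne, hnrel⟩ := hadj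
  rw [SimpleGraph.fromRel_adj] at hnrel
  have hnrel' : ¬((i.val = 0 ∧ j.val = 1) ∨
      (i.val = 0 ∧ 2 ≤ j.val ∧ j.val ≤ m + 1) ∨
      (i.val = 1 ∧ m + 2 ≤ j.val ∧ j.val ≤ 2 * m + 1)) ∧
      ¬((j.val = 0 ∧ i.val = 1) ∨
      (j.val = 0 ∧ 2 ≤ i.val ∧ i.val ≤ m + 1) ∨
      (j.val = 1 ∧ m + 2 ≤ i.val ∧ i.val ≤ 2 * m + 1)) :=
    ⟨fun h => hnrel ⟨hne, Or.inl h⟩, fun h => hnrel ⟨hne, Or.inr h⟩⟩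
  rw [SimpleGraph.compl_adj]
  refine ⟨fun h => hne (hfinj h), ?_⟩
  have hAne : ∀ w ∈ W, w ∉ A' → ¬ M.Adj x w := by
    intro w hw hwA hMA
    exact hwA (hAA' (hAmem w hw hMA))
  have hBne : ∀ w ∈ W, w ∉ B' → ¬ M.Adj y w := by
    intro w hw hwB hMB
    exact hwB (hBB' (hBmem w hw hMB))
  have hA'nB : ∀ w ∈ A', ¬ M.Adj y w := by
    intro w hw hMB
    exact (mem_sdiff.mp (hA'WB hw)).2 (hBmem w (hA'W hw) hMB)
  rcases hzone i with ⟨h1, e1⟩ | ⟨h1, e1⟩ | ⟨h1, h1', j₁, e1, he1⟩ |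
      ⟨h1, h1', j₁, e1, he1⟩ | ⟨h1, j₁, e1, he1⟩ <;>
    rcases hzone j with ⟨g1, f1⟩ | ⟨g1, f1⟩ | ⟨g1, g1', j₂, f1, hf1⟩ |
      ⟨g1, g1', j₂, f1, hf1⟩ | ⟨g1, j₂, f1, hf1⟩
  · exact absurd (Fin.ext (by omega : i.val = j.val)) hne
  · exact absurd (Or.inl ⟨h1, g1⟩) hnrel'.1
  · exact absurd (Or.inr (Or.inl ⟨h1, by omega⟩)) hnrel'.1
  · rw [e1, f1]
    exact hAne (eB j₂) (hB'W (heBmem j₂)) (hB'A' _ (heBmem j₂))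
  · rw [e1, f1]
    exact hAne (eC j₂) (hCW (heCmem j₂)) (hCA' _ (heCmem j₂))
  · exact absurd (Or.inl ⟨g1, h1⟩) hnrel'.2
  · exact absurd (Fin.ext (by omega : i.val = j.val)) hne
  · rw [e1, f1]
    exact hA'nB (eA j₂) (heAmem j₂)
  · exact absurd (Or.inr (Or.inr ⟨h1, by omega⟩)) hnrel'.1
  · rw [e1, f1]
    exact hBne (eC j₂) (hCW (heCmem j₂)) (hCB' _ (heCmem j₂))
  · exact absurd (Or.inr (Or.inl ⟨g1, by omega⟩)) hnrel'.2
  · rw [e1, f1]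
    intro hM
    exact hA'nB (eA j₁) (heAmem j₁) hM.symm
  · rw [e1, f1]
    exact hWind _ (hA'W (heAmem j₁)) _ (hA'W (heAmem j₂))
      (fun hEq => hne (hfinj (by rw [e1, f1, hEq])))
  · rw [e1, f1]
    exact hWind _ (hA'W (heAmem j₁)) _ (hB'W (heBmem j₂))
      (fun hEq => hne (hfinj (by rw [e1, f1, hEq])))
  · rw [e1, f1]
    exact hWind _ (hA'W (heAmem j₁)) _ (hCW (heCmem j₂))
      (fun hEq => hne (hfinj (by rw [e1, f1, hEq])))
  · rw [e1, f1]
    intro hM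
    exact hAne (eB j₁) (hB'W (heBmem j₁)) (hB'A' _ (heBmem j₁)) hM.symm
  · exact absurd (Or.inr (Or.inr ⟨g1, by omega⟩)) hnrel'.2
  · rw [e1, f1]
    exact hWind _ (hB'W (heBmem j₁)) _ (hA'W (heAmem j₂))
      (fun hEq => hne (hfinj (by rw [e1, f1, hEq])))
  · rw [e1, f1]
    exact hWind _ (hB'W (heBmem j₁)) _ (hB'W (heBmem j₂))
      (fun hEq => hne (hfinj (by rw [e1, f1, hEq])))
  · rw [e1, f1]
    exact hWind _ (hB'W (heBmem j₁)) _ (hCW (heCmem j₂))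
      (fun hEq => hne (hfinj (by rw [e1, f1, hEq])))
  · rw [e1, f1]
    intro hM
    exact hAne (eC j₁) (hCW (heCmem j₁)) (hCA' _ (heCmem j₁)) hM.symm
  · rw [e1, f1]
    intro hM
    exact hBne (eC j₁) (hCW (heCmem j₁)) (hCB' _ (heCmem j₁)) hM.symm
  · rw [e1, f1]
    exact hWind _ (hCW (heCmem j₁)) _ (hA'W (heAmem j₂))
      (fun hEq => hne (hfinj (by rw [e1, f1, hEq])))
  · rw [e1, f1]
    exact hWind _ (hCW (heCmem j₁)) _ (hB'W (heBmem j₂))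
      (fun hEq => hne (hfinj (by rw [e1, f1, hEq])))
  · rw [e1, f1]
    exact hWind _ (hCW (heCmem j₁)) _ (hCW (heCmem j₂))
      (fun hEq => hne (hfinj (by rw [e1, f1, hEq])))

private lemma exists_config {V : Type*} [Fintype V] [DecidableEq V] (M : SimpleGraph V)
    [DecidableRel M.Adj]
    (htf : M.CliqueFree 3) (n m : ℕ) (hm2 : n ≤ 2 * m + 2)
    (hcard : 3 * n + 4 ≤ Fintype.card V)
    (W₀ : Finset V) (hW₀c : W₀.card = n)
    (hW₀i : ∀ u ∈ W₀, ∀ v ∈ W₀, u ≠ v → ¬M.Adj u v)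
    (hα : ∀ I : Finset V, (∀ u ∈ I, ∀ v ∈ I, u ≠ v → ¬M.Adj u v) → I.card ≤ n + 1) :
    ∃ (W : Finset V) (x y : V), (∀ u ∈ W, ∀ v ∈ W, u ≠ v → ¬M.Adj u v) ∧ W.card = n ∧
      x ∉ W ∧ y ∉ W ∧ x ≠ y ∧
      (W.filter (fun w => M.Adj x w)).card ≤ m ∧ (W.filter (fun w => M.Adj y w)).card ≤ m ∧
      W.filter (fun w => M.Adj x w) ∩ W.filter (fun w => M.Adj y w) = ∅ := by
  classical
  set valid : Finset V → V → V → Prop := fun W u v =>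
    (∀ a ∈ W, ∀ b ∈ W, a ≠ b → ¬M.Adj a b) ∧ W.card = n ∧ u ∉ W ∧ v ∉ W ∧ u ≠ v ∧
      W.filter (fun w => M.Adj u w) ∩ W.filter (fun w => M.Adj v w) = ∅ with hvaliddef
  set S : Set ℕ := {k | ∃ W u v, valid W u v ∧
    k = (n + 2) * max (W.filter (fun w => M.Adj u w)).card (W.filter (fun w => M.Adj v w)).card
      + min (W.filter (fun w => M.Adj u w)).card (W.filter (fun w => M.Adj v w)).card}
    with hSdef
  -- S is nonempty
  have hT₀ : ∃ u v : V, u ∉ W₀ ∧ v ∉ W₀ ∧ u ≠ v ∧ M.Adj u v := by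
    by_contra hcon
    push_neg at hcon
    have h1 : ((Finset.univ : Finset V) \ W₀).card ≤ n + 1 := by
      refine hα _ ?_
      intro u hu v hv huv
      exact hcon u v (mem_sdiff.mp hu).2 (mem_sdiff.mp hv).2 huv
    have h2 : ((Finset.univ : Finset V) \ W₀).card = Fintype.card V - n := by
      rw [card_sdiff_of_subset (subset_univ _), card_univ, hW₀c]
    omega
  obtain ⟨u₀, v₀, hu₀, hv₀, hne₀, hadj₀⟩ := hT₀
  have hS : S.Nonempty :=
    ⟨_, W₀, u₀, v₀, ⟨hW₀i, hW₀c, hu₀, hv₀, hne₀, tri_disj' M htf hadj₀ W₀⟩, rfl⟩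
  obtain ⟨W', u', v', hval', hk'⟩ := Nat.sInf_mem hS
  suffices main : ∀ W x y, valid W x y →
      (n + 2) * max (W.filter (fun w => M.Adj x w)).card (W.filter (fun w => M.Adj y w)).card
        + min (W.filter (fun w => M.Adj x w)).card (W.filter (fun w => M.Adj y w)).card
        = sInf S →
      (W.filter (fun w => M.Adj y w)).card ≤ (W.filter (fun w => M.Adj x w)).card →
      ∃ (W : Finset V) (x y : V), (∀ u ∈ W, ∀ v ∈ W, u ≠ v → ¬M.Adj u v) ∧ W.card = n ∧
        x ∉ W ∧ y ∉ W ∧ x ≠ y ∧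
        (W.filter (fun w => M.Adj x w)).card ≤ m ∧ (W.filter (fun w => M.Adj y w)).card ≤ m ∧
        W.filter (fun w => M.Adj x w) ∩ W.filter (fun w => M.Adj y w) = ∅ by
    rcases le_total (W'.filter (fun w => M.Adj v' w)).card (W'.filter (fun w => M.Adj u' w)).card
      with h | h
    · exact main W' u' v' hval' hk'.symm h
    · refine main W' v' u' ⟨hval'.1, hval'.2.1, hval'.2.2.2.1, hval'.2.2.1,
        hval'.2.2.2.2.1.symm, by rw [Finset.inter_comm]; exact hval'.2.2.2.2.2⟩ ?_ h
      rw [max_comm, min_comm]; exact hk'.symm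
  intro W x y hval hq hba
  obtain ⟨hWind, hWcard, hxW, hyW, hxy, hdisjxy⟩ := hval
  set a := (W.filter (fun w => M.Adj x w)).card with hadef
  set b := (W.filter (fun w => M.Adj y w)).card with hbdef
  have hq' : (n + 2) * a + b = sInf S := by
    rw [← hq, max_eq_left hba, min_eq_right hba]
  have K : ∀ p r : V, p ∉ W → r ∉ W → p ≠ r →
      W.filter (fun w => M.Adj p w) ∩ W.filter (fun w => M.Adj r w) = ∅ →
      (n + 2) * a + b ≤
        (n + 2) * max (W.filter (fun w => M.Adj p w)).card (W.filter (fun w => M.Adj r w)).card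
        + min (W.filter (fun w => M.Adj p w)).card (W.filter (fun w => M.Adj r w)).card := by
    intro p r hp hr hpr hdisj
    rw [hq']
    exact Nat.sInf_le ⟨W, p, r, ⟨hWind, hWcard, hp, hr, hpr, hdisj⟩, rfl⟩
  have hdle : ∀ p : V, (W.filter (fun w => M.Adj p w)).card ≤ n := by
    intro p
    have h1 := Finset.card_le_card (Finset.filter_subset (fun w => M.Adj p w) W)
    rwa [hWcard] at h1
  have K2 : ∀ p r : V, p ∉ W → r ∉ W → p ≠ r →
      W.filter (fun w => M.Adj p w) ∩ W.filter (fun w => M.Adj r w) = ∅ →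
      a ≤ max (W.filter (fun w => M.Adj p w)).card (W.filter (fun w => M.Adj r w)).card := by
    intro p r hp hr hpr hdisj
    by_contra hlt
    push_neg at hlt
    have h1 := K p r hp hr hpr hdisj
    set Mx := max (W.filter (fun w => M.Adj p w)).card (W.filter (fun w => M.Adj r w)).card
      with hMxdef
    have h2 : (n + 2) * (Mx + 1) ≤ (n + 2) * a := Nat.mul_le_mul_left _ hlt
    have h3 : min (W.filter (fun w => M.Adj p w)).card (W.filter (fun w => M.Adj r w)).card ≤ n :=
      le_trans (min_le_left _ _) (hdle p)
    have h4 : (n + 2) * a + b < (n + 2) * a := by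
      calc (n + 2) * a + b
          ≤ (n + 2) * Mx + min (W.filter (fun w => M.Adj p w)).card
            (W.filter (fun w => M.Adj r w)).card := h1
        _ ≤ (n + 2) * Mx + n := by exact Nat.add_le_add_left h3 _
        _ < (n + 2) * Mx + (n + 2) := by omega
        _ = (n + 2) * (Mx + 1) := by ring
        _ ≤ (n + 2) * a := h2
    exact absurd h4 (not_lt.mpr (Nat.le_add_right _ _))
  by_cases ham : a ≤ m
  · exact ⟨W, x, y, hWind, hWcard, hxW, hyW, hxy, ham, le_trans hba ham, hdisjxy⟩
  exfalso
  push_neg at ham  -- m + 1 ≤ a, i.e. m < a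
  have h2a : n ≤ 2 * a := by omega
  have hapos : 0 < a := by omega
  obtain ⟨w₀, hw₀⟩ := Finset.card_pos.mp (hadef ▸ hapos)
  have hw₀W : w₀ ∈ W := (Finset.mem_filter.mp hw₀).1
  have hn1 : 1 ≤ n := by
    have := Finset.card_pos.mpr ⟨w₀, hw₀W⟩
    omega
  by_cases hzero : ∃ p, p ∉ W ∧ W.filter (fun w => M.Adj p w) = ∅
  · -- some vertex outside W with no neighbours in W
    obtain ⟨p, hpW, hpf⟩ := hzero
    have hall : ∀ r, r ∉ W → r ≠ p → a ≤ (W.filter (fun w => M.Adj r w)).card := by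
      intro r hr hrp
      have h1 := K2 p r hpW hr (fun h => hrp h.symm) (by rw [hpf]; exact Finset.empty_inter _)
      rwa [show max (W.filter (fun w => M.Adj p w)).card (W.filter (fun w => M.Adj r w)).card
        = (W.filter (fun w => M.Adj r w)).card from by
          rw [hpf]; simp] at h1
    set P₁ := Finset.univ.filter (fun r => r ∉ W ∧ r ≠ p ∧ w₀ ∈ W.filter (fun w => M.Adj r w))
      with hP₁def
    set P₂ := Finset.univ.filter (fun r => r ∉ W ∧ r ≠ p ∧ w₀ ∉ W.filter (fun w => M.Adj r w))
      with hP₂def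
    have hP₁ : P₁.card ≤ n + 1 := by
      refine hα _ ?_
      intro s hs t ht hst hadj
      rw [hP₁def, mem_filter] at hs ht
      have hdisj := tri_disj' M htf hadj W
      exact Finset.notMem_empty w₀ (hdisj ▸ Finset.mem_inter.mpr ⟨hs.2.2.2, ht.2.2.2⟩)
    have hP₂ : P₂.card ≤ n + 1 := by
      refine hα _ ?_
      intro s hs t ht hst hadj
      rw [hP₂def, mem_filter] at hs ht
      have hdisj := tri_disj' M htf hadj W
      have hsub : W.filter (fun w => M.Adj s w) ∪ W.filter (fun w => M.Adj t w)
          ⊆ W.erase w₀ := by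
        intro w hw
        rcases Finset.mem_union.mp hw with h | h
        · exact Finset.mem_erase.mpr ⟨fun he => hs.2.2.2 (he ▸ h), (mem_filter.mp h).1⟩
        · exact Finset.mem_erase.mpr ⟨fun he => ht.2.2.2 (he ▸ h), (mem_filter.mp h).1⟩
      have hcardu : n ≤ (W.filter (fun w => M.Adj s w) ∪ W.filter (fun w => M.Adj t w)).card := by
        rw [Finset.card_union_of_disjoint (Finset.disjoint_iff_inter_eq_empty.mpr hdisj)]
        have h1 := hall s hs.2.1 hs.2.2.1
        have h2 := hall t ht.2.1 ht.2.2.1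
        omega
      have h3 := Finset.card_le_card hsub
      rw [Finset.card_erase_of_mem hw₀W, hWcard] at h3
      omega
    have hcover : (Finset.univ : Finset V) ⊆ W ∪ (({p} : Finset V) ∪ (P₁ ∪ P₂)) := by
      intro r _
      by_cases h1 : r ∈ W
      · exact Finset.mem_union.mpr (Or.inl h1)
      by_cases h2 : r = p
      · exact Finset.mem_union.mpr (Or.inr (Finset.mem_union.mpr (Or.inl (by
          rw [h2]; exact Finset.mem_singleton_self p))))
      by_cases h3 : w₀ ∈ W.filter (fun w => M.Adj r w)
      · exact Finset.mem_union.mpr (Or.inr (Finset.mem_union.mpr (Or.inr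
          (Finset.mem_union.mpr (Or.inl (by
            rw [hP₁def, mem_filter]; exact ⟨mem_univ r, h1, h2, h3⟩))))))
      · exact Finset.mem_union.mpr (Or.inr (Finset.mem_union.mpr (Or.inr
          (Finset.mem_union.mpr (Or.inr (by
            rw [hP₂def, mem_filter]; exact ⟨mem_univ r, h1, h2, h3⟩))))))
    have hcount : Fintype.card V ≤ n + (1 + ((n + 1) + (n + 1))) := by
      calc Fintype.card V = (Finset.univ : Finset V).card := card_univ.symm
        _ ≤ (W ∪ (({p} : Finset V) ∪ (P₁ ∪ P₂))).card := Finset.card_le_card hcover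
        _ ≤ W.card + ({p} ∪ (P₁ ∪ P₂)).card := Finset.card_union_le _ _
        _ ≤ W.card + (({p} : Finset V).card + (P₁ ∪ P₂).card) :=
            Nat.add_le_add_left (Finset.card_union_le _ _) _
        _ ≤ W.card + (({p} : Finset V).card + (P₁.card + P₂.card)) :=
            Nat.add_le_add_left (Nat.add_le_add_left (Finset.card_union_le _ _) _) _
        _ ≤ n + (1 + ((n + 1) + (n + 1))) := by
            rw [hWcard, Finset.card_singleton]
            omega
    omega
  -- main case: every vertex outside W has a neighbour in W
  push_neg at hzero
  have hne' : ∀ p, p ∉ W → (W.filter (fun w => M.Adj p w)).Nonempty := fun p hp =>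
    hzero p hp
  set fs : V → Finset V := fun p => W.filter (fun w => M.Adj p w) with hfsdef
  set isL : V → Prop := fun p => p ∉ W ∧ (fs p).card < a with hisLdef
  set isH : V → Prop := fun p => p ∉ W ∧ a ≤ (fs p).card with hisHdef
  set good : V → Prop := fun p => isH p ∧ ∀ q, isL q → (fs q ∩ fs p).Nonempty with hgooddef
  set bad : V → Prop := fun p => isH p ∧ ∃ q, isL q ∧ fs q ∩ fs p = ∅ with hbaddef
  set hasbad : V → Prop := fun p => ∃ z, bad z ∧ M.Adj p z with hhasbaddef
  have Lint : ∀ p q, isL p → isL q → p ≠ q → (fs p ∩ fs q).Nonempty := by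
    intro p q hp hq hpq
    by_contra hcon
    rw [Finset.not_nonempty_iff_eq_empty] at hcon
    have h1 := K2 p q hp.1 hq.1 hpq hcon
    have h2 : max (fs p).card (fs q).card < a := max_lt hp.2 hq.2
    exact absurd h1 (not_le.mpr h2)
  have Hcomp : ∀ p q, isH p → isH q → M.Adj p q → fs q = W \ fs p := by
    intro p q hp hq hadj
    have hdisj : fs p ∩ fs q = ∅ := tri_disj' M htf hadj W
    have hsub : fs p ∪ fs q ⊆ W :=
      Finset.union_subset (filter_subset _ _) (filter_subset _ _)
    have hcard2 : W.card ≤ (fs p ∪ fs q).card := by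
      rw [Finset.card_union_of_disjoint (Finset.disjoint_iff_inter_eq_empty.mpr hdisj), hWcard]
      have h1 := hp.2
      have h2 := hq.2
      omega
    have hUn : fs p ∪ fs q = W := Finset.eq_of_subset_of_card_le hsub hcard2
    ext w
    simp only [Finset.mem_sdiff]
    constructor
    · intro hw
      refine ⟨hsub (Finset.mem_union_right _ hw), fun hw2 =>
        Finset.notMem_empty w (hdisj ▸ Finset.mem_inter.mpr ⟨hw2, hw⟩)⟩
    · rintro ⟨hwW, hwp⟩
      have h1 : w ∈ fs p ∪ fs q := by rw [hUn]; exact hwW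
      rcases Finset.mem_union.mp h1 with h | h
      · exact absurd h hwp
      · exact h
  have NL : ∀ p q, isL p → isL q → p ≠ q → ¬M.Adj p q := by
    intro p q hp hq hpq hadj
    have hdisj : fs p ∩ fs q = ∅ := tri_disj' M htf hadj W
    obtain ⟨w, hw⟩ := Lint p q hp hq hpq
    exact Finset.notMem_empty w (hdisj ▸ hw)
  have NLG : ∀ p q, isL p → good q → ¬M.Adj p q := by
    intro p q hp hq hadj
    have hdisj : fs p ∩ fs q = ∅ := tri_disj' M htf hadj W
    obtain ⟨w, hw⟩ := hq.2 p hp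
    exact Finset.notMem_empty w (hdisj ▸ hw)
  have NBB : ∀ p q, bad p → bad q → ¬M.Adj p q := by
    intro p q hp hq hadj
    have hcomp := Hcomp p q hp.1 hq.1 hadj
    obtain ⟨s, hsL, hs⟩ := hp.2
    obtain ⟨t, htL, ht⟩ := hq.2
    have hssub : fs s ⊆ fs q := by
      rw [hcomp]
      intro w hw
      exact Finset.mem_sdiff.mpr ⟨(filter_subset _ _) hw,
        fun h2 => Finset.notMem_empty w (hs ▸ Finset.mem_inter.mpr ⟨hw, h2⟩)⟩
    by_cases hst : s = t
    · subst hst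
      obtain ⟨w, hw⟩ := hne' s hsL.1
      exact Finset.notMem_empty w (ht ▸ Finset.mem_inter.mpr ⟨hw, hssub hw⟩)
    · obtain ⟨w, hw⟩ := Lint s t hsL htL hst
      have h1 : w ∈ fs q := hssub (Finset.mem_inter.mp hw).1
      exact Finset.notMem_empty w (ht ▸ Finset.mem_inter.mpr ⟨(Finset.mem_inter.mp hw).2, h1⟩)
  have NGB : ∀ p q, good p → hasbad p → good q → ¬M.Adj p q := by
    rintro p q hp ⟨z, hz, hpz⟩ hq hadj
    have h1 := Hcomp p q hp.1 hq.1 hadj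
    have h2 := Hcomp p z hp.1 hz.1 hpz
    obtain ⟨s, hsL, hs⟩ := hz.2
    have h3 : fs s ∩ fs q = ∅ := by rw [h1, ← h2]; exact hs
    obtain ⟨w, hw⟩ := hq.2 s hsL
    exact Finset.notMem_empty w (h3 ▸ hw)
  have NY2 : ∀ p q, isH p → isH q → w₀ ∉ fs p → w₀ ∉ fs q → ¬M.Adj p q := by
    intro p q hp hq hwp hwq hadj
    have h1 := Hcomp p q hp hq hadj
    exact hwq (h1 ▸ Finset.mem_sdiff.mpr ⟨hw₀W, hwp⟩)
  have NY1 : ∀ p q, w₀ ∈ fs p → w₀ ∈ fs q → ¬M.Adj p q := by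
    intro p q h1 h2 hadj
    exact Finset.notMem_empty w₀ ((tri_disj' M htf hadj W) ▸ Finset.mem_inter.mpr ⟨h1, h2⟩)
  have NBY : ∀ p q, bad p → ¬hasbad q → ¬M.Adj p q := by
    intro p q hp hnb hadj
    exact hnb ⟨p, hp, hadj.symm⟩
  set I₁ := Finset.univ.filter
    (fun p => isL p ∨ (good p ∧ hasbad p) ∨ (good p ∧ ¬hasbad p ∧ w₀ ∉ fs p)) with hI₁def
  set I₂ := Finset.univ.filter
    (fun p => bad p ∨ (good p ∧ ¬hasbad p ∧ w₀ ∈ fs p)) with hI₂def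
  have hI₁ : I₁.card ≤ n + 1 := by
    refine hα _ ?_
    intro p hp q hq hpq hadj
    rw [hI₁def, mem_filter] at hp hq
    rcases hp.2 with hL | ⟨hg, hb⟩ | ⟨hg, hnb, hw⟩ <;>
      rcases hq.2 with hL' | ⟨hg', hb'⟩ | ⟨hg', hnb', hw'⟩
    · exact NL p q hL hL' hpq hadj
    · exact NLG p q hL hg' hadj
    · exact NLG p q hL hg' hadj
    · exact NLG q p hL' hg (hadj.symm)
    · exact NGB p q hg hb hg' hadj
    · exact NGB p q hg hb hg' hadj
    · exact NLG q p hL' hg (hadj.symm)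
    · exact NGB q p hg' hb' hg hadj.symm
    · exact NY2 p q hg.1 hg'.1 hw hw' hadj
  have hI₂ : I₂.card ≤ n + 1 := by
    refine hα _ ?_
    intro p hp q hq hpq hadj
    rw [hI₂def, mem_filter] at hp hq
    rcases hp.2 with hB | ⟨hg, hnb, hw⟩ <;>
      rcases hq.2 with hB' | ⟨hg', hnb', hw'⟩
    · exact NBB p q hB hB' hadj
    · exact NBY p q hB hnb' hadj
    · exact NBY q p hB' hnb hadj.symm
    · exact NY1 p q hw hw' hadj
  have hcover : (Finset.univ : Finset V) ⊆ W ∪ (I₁ ∪ I₂) := by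
    intro p _
    by_cases hpW : p ∈ W
    · exact Finset.mem_union.mpr (Or.inl hpW)
    refine Finset.mem_union.mpr (Or.inr ?_)
    by_cases hLa : (fs p).card < a
    · exact Finset.mem_union.mpr (Or.inl (by
        rw [hI₁def, mem_filter]; exact ⟨mem_univ p, Or.inl ⟨hpW, hLa⟩⟩))
    have hH : isH p := ⟨hpW, le_of_not_gt hLa⟩
    by_cases hg : ∀ q, isL q → (fs q ∩ fs p).Nonempty
    · by_cases hhb : hasbad p
      · exact Finset.mem_union.mpr (Or.inl (by
          rw [hI₁def, mem_filter]; exact ⟨mem_univ p, Or.inr (Or.inl ⟨⟨hH, hg⟩, hhb⟩)⟩))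
      · by_cases hw : w₀ ∈ fs p
        · exact Finset.mem_union.mpr (Or.inr (by
            rw [hI₂def, mem_filter]; exact ⟨mem_univ p, Or.inr ⟨⟨hH, hg⟩, hhb, hw⟩⟩))
        · exact Finset.mem_union.mpr (Or.inl (by
            rw [hI₁def, mem_filter]; exact ⟨mem_univ p, Or.inr (Or.inr ⟨⟨hH, hg⟩, hhb, hw⟩)⟩))
    · refine Finset.mem_union.mpr (Or.inr (by
        rw [hI₂def, mem_filter]
        refine ⟨mem_univ p, Or.inl ⟨hH, ?_⟩⟩
        push_neg at hg
        obtain ⟨q, hqL, hqne⟩ := hg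
        exact ⟨q, hqL, hqne⟩))
  have hcount : Fintype.card V ≤ n + ((n + 1) + (n + 1)) := by
    calc Fintype.card V = (Finset.univ : Finset V).card := card_univ.symm
      _ ≤ (W ∪ (I₁ ∪ I₂)).card := Finset.card_le_card hcover
      _ ≤ W.card + (I₁ ∪ I₂).card := Finset.card_union_le _ _
      _ ≤ W.card + (I₁.card + I₂.card) := Nat.add_le_add_left (Finset.card_union_le _ _) _
      _ ≤ n + ((n + 1) + (n + 1)) := by rw [hWcard]; omega
  omega

theorem stmt3 {V : Type*} [Fintype V] (n : ℕ) (M : SimpleGraph V)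
    (htf : M.CliqueFree 3)
    (hK : Contains (⊤ : SimpleGraph (Fin n)) Mᶜ)
    (hcard : 3 * n + 4 ≤ Fintype.card V) :
    Contains (KnMinusDoubleStar (n + 2) ((n - 1) / 2)) Mᶜ := by
  classical
  have hm1 : 2 * ((n - 1) / 2) ≤ n := by omega
  have hm2 : n ≤ 2 * ((n - 1) / 2) + 2 := by omega
  by_cases hbig : ∃ I : Finset V, (∀ u ∈ I, ∀ v ∈ I, u ≠ v → ¬M.Adj u v) ∧ n + 2 ≤ I.card
  · obtain ⟨I, hIind, hIc⟩ := hbig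
    obtain ⟨J, hJI, hJc⟩ := Finset.exists_subset_card_eq hIc
    have hJind : ∀ u ∈ J, ∀ v ∈ J, u ≠ v → ¬M.Adj u v :=
      fun u hu v hv => hIind u (hJI hu) v (hJI hv)
    have h0 : 0 < J.card := by omega
    obtain ⟨x, hxJ⟩ := Finset.card_pos.mp h0
    have h1 : 0 < (J.erase x).card := by
      rw [Finset.card_erase_of_mem hxJ, hJc]; omega
    obtain ⟨y, hyJ'⟩ := Finset.card_pos.mp h1
    have hyJ : y ∈ J := Finset.mem_of_mem_erase hyJ'
    have hyx : y ≠ x := Finset.ne_of_mem_erase hyJ'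
    set W := (J.erase x).erase y with hWdef
    have hWc : W.card = n := by
      rw [hWdef, Finset.card_erase_of_mem hyJ', Finset.card_erase_of_mem hxJ, hJc]
      omega
    have hxW : x ∉ W := fun h =>
      (Finset.mem_erase.mp (Finset.mem_of_mem_erase h)).1 rfl
    have hyW : y ∉ W := fun h => (Finset.mem_erase.mp h).1 rfl
    have hWJ : W ⊆ J := fun w hw =>
      Finset.mem_of_mem_erase (Finset.mem_of_mem_erase hw)
    have hWind : ∀ u ∈ W, ∀ v ∈ W, u ≠ v → ¬M.Adj u v :=
      fun u hu v hv => hJind u (hWJ hu) v (hWJ hv)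
    have hfx : W.filter (fun w => M.Adj x w) = ∅ := by
      rw [Finset.filter_eq_empty_iff]
      intro w hw
      exact hJind x hxJ w (hWJ hw) (fun he => hxW (he ▸ hw))
    have hfy : W.filter (fun w => M.Adj y w) = ∅ := by
      rw [Finset.filter_eq_empty_iff]
      intro w hw
      exact hJind y hyJ w (hWJ hw) (fun he => hyW (he ▸ hw))
    exact embed_of_config M n ((n - 1) / 2) hm1 W hWc hWind x y hxW hyW (Ne.symm hyx)
      (by rw [hfx]; simp) (by rw [hfy]; simp) (by rw [hfx]; exact Finset.empty_inter _)
  · push_neg at hbig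
    have hα : ∀ I : Finset V, (∀ u ∈ I, ∀ v ∈ I, u ≠ v → ¬M.Adj u v) → I.card ≤ n + 1 := by
      intro I hI
      have := hbig I hI
      omega
    obtain ⟨f₀, hf₀inj, hf₀adj⟩ := hK
    set W₀ := Finset.univ.image f₀ with hW₀def
    have hW₀c : W₀.card = n := by
      rw [hW₀def, Finset.card_image_of_injective _ hf₀inj, Finset.card_univ, Fintype.card_fin]
    have hW₀ind : ∀ u ∈ W₀, ∀ v ∈ W₀, u ≠ v → ¬M.Adj u v := by
      intro u hu v hv huv
      rw [hW₀def, Finset.mem_image] at hu hv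
      obtain ⟨i, -, rfl⟩ := hu
      obtain ⟨j, -, rfl⟩ := hv
      have hij : i ≠ j := fun h => huv (by rw [h])
      have h2 := hf₀adj (show (⊤ : SimpleGraph (Fin n)).Adj i j from hij)
      exact ((SimpleGraph.compl_adj _ _ _).mp h2).2
    obtain ⟨W, x, y, h1, h2, h3, h4, h5, h6, h7, h8⟩ :=
      exists_config M htf n ((n - 1) / 2) hm2 hcard W₀ hW₀c hW₀ind hα
    exact embed_of_config M n ((n - 1) / 2) hm1 W h2 h1 x y h3 h4 h5 h6 h7 h8
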